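/- Let a, p ∈ ℤⁿ_{++} and β a positive integer, and suppose that for every x ∈ ℝⁿ_{≥0} with a·x = β we have k < p·x < k+1, for some integer k ≥ 0. Then for every x̄ ∈ ℤ^{n-1}_{≥0} with Σ_{i=1}^{n-1} x̄ᵢ ≤ ⌊k/max_i pᵢ⌋, there exists x ∈ ℝⁿ_{≥0} with xᵢ = x̄ᵢ for i = 1,…,n−1 and a·x = β. Consequently the number of such LP-feasible partial fixings is at least C(⌊k/‖p‖_∞⌋ + n − 1, n − 1). -/

import Mathlib

open Finset in
lemma sum_count_univ' {α : Type*} [Fintype α] [DecidableEq α] (m : Multiset α) :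
    ∑ i : α, m.count i = Multiset.card m := by
  rw [← Multiset.toFinset_sum_count_eq m]
  exact (Finset.sum_subset (Finset.subset_univ _) (fun x _ hx =>
    Multiset.count_eq_zero_of_notMem (by simpa [Multiset.mem_toFinset] using hx))).symm

lemma count_lemma' (n K : ℕ) :
    (K + n).choose n ≤ Set.ncard {xb : Fin n → ℕ | ∑ i, xb i ≤ K} := by
  classical
  set S : Set (Fin n → ℕ) := {xb : Fin n → ℕ | ∑ i, xb i ≤ K} with hS
  have hfin : S.Finite := by
    apply Set.Finite.subset (Set.Finite.pi (fun i : Fin n => Set.finite_Iic K))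
    intro xb hxb
    intro i _
    exact le_trans (Finset.single_le_sum (f := fun j => xb j) (fun _ _ => Nat.zero_le _)
      (Finset.mem_univ i)) hxb
  set g : Sym (Fin (n+1)) K → (Fin n → ℕ) := fun m i => Multiset.count i.castSucc (m : Multiset (Fin (n+1))) with hg
  have hrange : Set.range g ⊆ S := by
    rintro _ ⟨m, rfl⟩
    simp only [hS, Set.mem_setOf_eq, hg]
    calc ∑ i : Fin n, Multiset.count i.castSucc (m : Multiset (Fin (n+1)))
        ≤ ∑ i : Fin (n+1), Multiset.count i (m : Multiset (Fin (n+1))) := by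
          rw [Fin.sum_univ_castSucc]; exact Nat.le_add_right _ _
      _ = K := by rw [sum_count_univ']; exact m.2
  have hinj : Function.Injective g := by
    intro m m' h
    have hc : ∀ i : Fin (n+1), Multiset.count i (m : Multiset _) = Multiset.count i (m' : Multiset _) := by
      intro i
      induction i using Fin.lastCases with
      | last =>
        have h1 : ∑ i : Fin (n+1), Multiset.count i (m : Multiset _) = K := by
          rw [sum_count_univ']; exact m.2
        have h2 : ∑ i : Fin (n+1), Multiset.count i (m' : Multiset _) = K := by
          rw [sum_count_univ']; exact m'.2
        rw [Fin.sum_univ_castSucc] at h1 h2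
        have hsum : ∑ i : Fin n, Multiset.count i.castSucc (m : Multiset _)
            = ∑ i : Fin n, Multiset.count i.castSucc (m' : Multiset _) :=
          Finset.sum_congr rfl fun i _ => congrFun h i
        omega
      | cast j => exact congrFun h j
    exact Subtype.ext (Multiset.ext.mpr hc)
  calc (K + n).choose n = Fintype.card (Sym (Fin (n+1)) K) := by
        rw [Sym.card_sym_eq_choose, Fintype.card_fin]
        rw [show n + 1 + K - 1 = K + n by omega, ← Nat.choose_symm (Nat.le_add_right K n)]
        congr 1
        omega
      _ = Set.ncard (Set.range g) := by
        rw [← Set.image_univ, Set.ncard_image_of_injective _ hinj, Set.ncard_univ,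
          Nat.card_eq_fintype_card]
      _ ≤ Set.ncard S := Set.ncard_le_ncard hrange hfin


/-- If the infeasibility of the unbounded equality knapsack `ax = β, x ≥ 0`
(in dimension `n+1`) is proven by the split disjunction `px ≤ k ∨ px ≥ k+1`,
then every fixing of the first `n` variables to nonnegative integers with sum
at most `⌊k/‖p‖_∞⌋` is LP-feasible; the number of such fixings is at least
`C(⌊k/‖p‖_∞⌋ + n, n)`. -/
theorem unbounded_bb_nodes (n : ℕ) (a p : Fin (n + 1) → ℤ)
    (ha : ∀ i, 0 < a i) (hp : ∀ i, 0 < p i)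
    (β : ℤ) (hβ : 0 < β) (k : ℤ) (hk : 0 ≤ k)
    (hsplit : ∀ x : Fin (n + 1) → ℝ, (∀ i, 0 ≤ x i) →
      (∑ i, (a i : ℝ) * x i) = (β : ℝ) →
      ((k : ℝ) < ∑ i, (p i : ℝ) * x i ∧ (∑ i, (p i : ℝ) * x i) < (k : ℝ) + 1)) :
    (∀ xb : Fin n → ℕ,
      (∑ i, (xb i : ℤ)) ≤ k / (Finset.univ.sup' Finset.univ_nonempty p) →
      ∃ x : Fin (n + 1) → ℝ, (∀ i, 0 ≤ x i) ∧
        (∀ i : Fin n, x i.castSucc = (xb i : ℝ)) ∧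
        (∑ i, (a i : ℝ) * x i) = (β : ℝ)) ∧
    ((k / (Finset.univ.sup' Finset.univ_nonempty p)).toNat + n).choose n ≤
      Set.ncard {xb : Fin n → ℕ |
        (∑ i, (xb i : ℤ)) ≤ k / (Finset.univ.sup' Finset.univ_nonempty p)} := by
  set M := Finset.univ.sup' Finset.univ_nonempty p with hM
  have hMpos : 0 < M := lt_of_lt_of_le (hp 0) (Finset.le_sup' p (Finset.mem_univ 0))
  have hMle : ∀ i, p i ≤ M := fun i => Finset.le_sup' p (Finset.mem_univ i)
  have hkM : 0 ≤ k / M := Int.ediv_nonneg hk hMpos.le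
  constructor
  · intro xb hxb
    -- the key bound: p·(xb,0) ≤ k in ℤ
    have hpk : (∑ i : Fin n, p i.castSucc * (xb i : ℤ)) ≤ k := by
      calc ∑ i : Fin n, p i.castSucc * (xb i : ℤ)
          ≤ ∑ i : Fin n, M * (xb i : ℤ) := Finset.sum_le_sum fun i _ =>
            mul_le_mul_of_nonneg_right (hMle _) (Int.natCast_nonneg _)
        _ = M * ∑ i : Fin n, (xb i : ℤ) := by rw [Finset.mul_sum]
        _ ≤ M * (k / M) := mul_le_mul_of_nonneg_left hxb hMpos.le
        _ ≤ k := by rw [mul_comm]; exact Int.ediv_mul_le k hMpos.ne'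
    set S : ℤ := ∑ i : Fin n, a i.castSucc * (xb i : ℤ) with hSdef
    have hSnonneg : 0 ≤ S :=
      Finset.sum_nonneg fun i _ => mul_nonneg (ha _).le (Int.natCast_nonneg _)
    -- claim: S ≤ β
    have hSβ : S ≤ β := by
      by_contra hcon
      push_neg at hcon
      have hSR : (0:ℝ) < (S:ℝ) := by exact_mod_cast lt_trans hβ hcon
      set t : ℝ := (β : ℝ) / (S : ℝ) with ht
      have ht0 : 0 ≤ t := div_nonneg (by exact_mod_cast hβ.le) hSR.le
      have ht1 : t ≤ 1 := by
        rw [ht, div_le_one hSR]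
        exact_mod_cast hcon.le
      set x : Fin (n+1) → ℝ := fun j => t * ((Fin.snoc (α := fun _ => ℝ) (fun i => (xb i : ℝ)) (0:ℝ) : Fin (n+1) → ℝ) j) with hx
      have hxsnoc : ∀ j, (0:ℝ) ≤ Fin.snoc (α := fun _ => ℝ) (fun i => (xb i : ℝ)) (0:ℝ) j := by
        intro j
        induction j using Fin.lastCases with
        | last => simp
        | cast i => simp
      have hxnn : ∀ j, 0 ≤ x j := fun j => mul_nonneg ht0 (hxsnoc j)
      have hax : (∑ j, (a j : ℝ) * x j) = (β : ℝ) := by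
        rw [Fin.sum_univ_castSucc]
        simp only [hx, Fin.snoc_castSucc, Fin.snoc_last, mul_zero]
        have : ∑ i : Fin n, (a i.castSucc : ℝ) * (t * (xb i : ℝ))
            = t * (S : ℝ) := by
          rw [hSdef]
          push_cast
          rw [Finset.mul_sum]
          apply Finset.sum_congr rfl
          intro i _
          ring
        rw [add_zero, this, ht, div_mul_cancel₀ _ hSR.ne']
      obtain ⟨hlow, _⟩ := hsplit x hxnn hax
      have hpx : (∑ j, (p j : ℝ) * x j) ≤ (k : ℝ) := by
        have h1 : (∑ j, (p j : ℝ) * x j)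
            = t * ∑ i : Fin n, (p i.castSucc : ℝ) * (xb i : ℝ) := by
          rw [Fin.sum_univ_castSucc]
          simp only [hx, Fin.snoc_castSucc, Fin.snoc_last, mul_zero, add_zero]
          rw [Finset.mul_sum]
          apply Finset.sum_congr rfl
          intro i _
          ring
        have h2 : (0:ℝ) ≤ ∑ i : Fin n, (p i.castSucc : ℝ) * (xb i : ℝ) :=
          Finset.sum_nonneg fun i _ => mul_nonneg (by exact_mod_cast (hp _).le)
            (Nat.cast_nonneg _)
        have h3 : (∑ i : Fin n, (p i.castSucc : ℝ) * (xb i : ℝ)) ≤ (k : ℝ) := by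
          exact_mod_cast hpk
        calc (∑ j, (p j : ℝ) * x j) = t * _ := h1
          _ ≤ 1 * ∑ i : Fin n, (p i.castSucc : ℝ) * (xb i : ℝ) :=
              mul_le_mul_of_nonneg_right ht1 h2
          _ = _ := one_mul _
          _ ≤ (k : ℝ) := h3
      exact absurd hpx (not_le.mpr hlow)
    -- now build the feasible point
    refine ⟨Fin.snoc (α := fun _ => ℝ) (fun i => (xb i : ℝ)) (((β : ℝ) - (S : ℝ)) / (a (Fin.last n) : ℝ)), ?_, ?_, ?_⟩
    · intro j
      induction j using Fin.lastCases with
      | last =>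
        simp only [Fin.snoc_last]
        apply div_nonneg
        · have : (S:ℝ) ≤ (β:ℝ) := by exact_mod_cast hSβ
          linarith
        · exact_mod_cast (ha _).le
      | cast i => simp
    · intro i; simp
    · rw [Fin.sum_univ_castSucc]
      simp only [Fin.snoc_castSucc, Fin.snoc_last]
      have hane : ((a (Fin.last n) : ℝ)) ≠ 0 := by
        exact_mod_cast (ha (Fin.last n)).ne'
      rw [mul_div_cancel₀ _ hane]
      have : ∑ i : Fin n, (a i.castSucc : ℝ) * (xb i : ℝ) = (S : ℝ) := by
        rw [hSdef]; push_cast; rfl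
      rw [this]; ring
  · have hset : {xb : Fin n → ℕ | (∑ i, (xb i : ℤ)) ≤ k / M}
        = {xb : Fin n → ℕ | ∑ i, xb i ≤ (k / M).toNat} := by
      ext xb
      simp only [Set.mem_setOf_eq]
      rw [← Int.toNat_of_nonneg hkM, ← Nat.cast_sum]
      exact Int.ofNat_le
    rw [hset]
    exact count_lemma' n (k / M).toNat
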